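/- arXiv:2412.18498 — 3 statements merged into one kernel-verified Lean document; each statement's English description precedes it below -/
import Mathlib

section
/- For every T > 0 and every continuous K : Δ_T → ℝ there exists a unique continuous resolvent kernel R : Δ_T → ℝ satisfying R(s,τ) = K(s,τ) + ∫_s^τ K(s,η) R(η,τ) dη for all (s,τ) ∈ Δ_T; moreover, for every continuous Θ : [0,T] → ℝ the function A(s) := Θ(s) + ∫_s^T R(s,τ) Θ(τ) dτ is continuous and satisfies A(s) = Θ(s) + ∫_s^T K(s,τ) A(τ) dτ for every s ∈ [0,T]. -/
open MeasureTheory Set intervalIntegral BoundedContinuousFunction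

lemma volterra_triangle_swap {a b : ℝ} (hab : a ≤ b) {G : ℝ → ℝ → ℝ}
    (hG : Continuous (Function.uncurry G)) :
    (∫ τ in a..b, ∫ η in a..τ, G η τ) = ∫ η in a..b, ∫ τ in η..b, G η τ := by
  set F : ℝ → ℝ → ℝ := fun η τ => if η ≤ τ then G η τ else 0 with hF
  set μ : Measure ℝ := volume.restrict (Icc a b) with hμ
  have hGint : Integrable (Function.uncurry G) (μ.prod μ) := by
    rw [hμ, Measure.prod_restrict]
    exact hG.continuousOn.integrableOn_compact (isCompact_Icc.prod isCompact_Icc)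
  have hFmeas : AEStronglyMeasurable (Function.uncurry F) (μ.prod μ) := by
    have : Function.uncurry F = ({p : ℝ × ℝ | p.1 ≤ p.2}).indicator (Function.uncurry G) := by
      funext p
      simp [Function.uncurry, hF, Set.indicator_apply, Set.mem_setOf_eq]
    rw [this]
    exact hG.aestronglyMeasurable.indicator (measurableSet_le measurable_fst measurable_snd)
  have hFint : Integrable (Function.uncurry F) (μ.prod μ) := by
    refine hGint.norm.mono' hFmeas (Filter.Eventually.of_forall fun p => ?_)
    simp only [Function.uncurry, hF]
    split <;> simp [abs_nonneg]
  have swap : (∫ τ, ∫ η, F η τ ∂μ ∂μ) = ∫ η, ∫ τ, F η τ ∂μ ∂μ :=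
    (integral_integral_swap hFint).symm
  have inner1 : ∀ τ ∈ Icc a b, (∫ η, F η τ ∂μ) = ∫ η in a..τ, G η τ := by
    intro τ hτ
    have : (fun η => F η τ) = (Iic τ).indicator (fun η => G η τ) := by
      funext η; simp [hF, Set.indicator_apply, Set.mem_Iic]
    have hset : Icc a b ∩ Iic τ = Icc a τ := by
      ext x; simp only [mem_inter_iff, mem_Icc, mem_Iic]
      exact ⟨fun h => ⟨h.1.1, h.2⟩, fun h => ⟨⟨h.1, h.2.trans hτ.2⟩, h.2⟩⟩
    rw [hμ, this, setIntegral_indicator measurableSet_Iic, hset,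
      integral_of_le hτ.1, integral_Icc_eq_integral_Ioc]
  have inner2 : ∀ η ∈ Icc a b, (∫ τ, F η τ ∂μ) = ∫ τ in η..b, G η τ := by
    intro η hη
    have : (fun τ => F η τ) = (Ici η).indicator (fun τ => G η τ) := by
      funext τ; simp [hF, Set.indicator_apply, Set.mem_Ici]
    have hset : Icc a b ∩ Ici η = Icc η b := by
      ext x; simp only [mem_inter_iff, mem_Icc, mem_Ici]
      exact ⟨fun h => ⟨h.2, h.1.2⟩, fun h => ⟨⟨hη.1.trans h.1, h.2⟩, h.1⟩⟩
    rw [hμ, this, setIntegral_indicator measurableSet_Ici, hset,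
      integral_of_le hη.2, integral_Icc_eq_integral_Ioc]
  calc (∫ τ in a..b, ∫ η in a..τ, G η τ)
      = ∫ τ, ∫ η, F η τ ∂μ ∂μ := by
        rw [integral_of_le hab, hμ, ← integral_Icc_eq_integral_Ioc]
        exact (setIntegral_congr_fun measurableSet_Icc fun τ hτ => (inner1 τ hτ)).symm
    _ = ∫ η, ∫ τ, F η τ ∂μ ∂μ := swap
    _ = ∫ η in a..b, ∫ τ in η..b, G η τ := by
        rw [integral_of_le hab, hμ, ← integral_Icc_eq_integral_Ioc]
        exact setIntegral_congr_fun measurableSet_Icc fun η hη => (inner2 η hη)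

/-- For every `T > 0` and continuous `K : Δ_T → ℝ` there exists a unique
continuous resolvent kernel `R : Δ_T → ℝ` satisfying
`R(s,τ) = K(s,τ) + ∫_s^τ K(s,η) R(η,τ) dη` on `Δ_T`; moreover for every continuous
`Θ : [0,T] → ℝ` the function `A(s) := Θ(s) + ∫_s^T R(s,τ) Θ(τ) dτ` is continuous and solves
the Volterra equation `A(s) = Θ(s) + ∫_s^T K(s,τ) A(τ) dτ` on `[0,T]`. -/
theorem volterra_resolvent_kernel
    (T : ℝ) (hT : 0 < T)
    (K : ℝ × ℝ → ℝ)
    (hK : ContinuousOn K {p : ℝ × ℝ | 0 ≤ p.1 ∧ p.1 ≤ p.2 ∧ p.2 ≤ T}) :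
    ∃ R : ℝ × ℝ → ℝ,
      (ContinuousOn R {p : ℝ × ℝ | 0 ≤ p.1 ∧ p.1 ≤ p.2 ∧ p.2 ≤ T} ∧
        ∀ s τ : ℝ, 0 ≤ s → s ≤ τ → τ ≤ T →
          R (s, τ) = K (s, τ) + ∫ η in s..τ, K (s, η) * R (η, τ)) ∧
      (∀ R' : ℝ × ℝ → ℝ,
        (ContinuousOn R' {p : ℝ × ℝ | 0 ≤ p.1 ∧ p.1 ≤ p.2 ∧ p.2 ≤ T} ∧
          ∀ s τ : ℝ, 0 ≤ s → s ≤ τ → τ ≤ T →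
            R' (s, τ) = K (s, τ) + ∫ η in s..τ, K (s, η) * R' (η, τ)) →
        EqOn R R' {p : ℝ × ℝ | 0 ≤ p.1 ∧ p.1 ≤ p.2 ∧ p.2 ≤ T}) ∧
      ∀ Θ : ℝ → ℝ, ContinuousOn Θ (Icc 0 T) →
        ContinuousOn (fun s => Θ s + ∫ τ in s..T, R (s, τ) * Θ τ) (Icc 0 T) ∧
        ∀ s ∈ Icc (0:ℝ) T,
          Θ s + ∫ τ in s..T, R (s, τ) * Θ τ =
            Θ s + ∫ τ in s..T, K (s, τ) * (Θ τ + ∫ x in τ..T, R (τ, x) * Θ x) := by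
  classical
  set Δ : Set (ℝ × ℝ) := {p : ℝ × ℝ | 0 ≤ p.1 ∧ p.1 ≤ p.2 ∧ p.2 ≤ T} with hΔdef
  -- Δ is compact
  have hΔsub : Δ ⊆ Icc 0 T ×ˢ Icc 0 T := by
    rintro ⟨s, τ⟩ ⟨h1, h2, h3⟩
    exact ⟨⟨h1, h2.trans h3⟩, ⟨h1.trans h2, h3⟩⟩
  have hΔclosed : IsClosed Δ := by
    have : Δ = {p : ℝ × ℝ | 0 ≤ p.1} ∩ ({p | p.1 ≤ p.2} ∩ {p | p.2 ≤ T}) := rfl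
    rw [this]
    exact (isClosed_le continuous_const continuous_fst).inter
      ((isClosed_le continuous_fst continuous_snd).inter
        (isClosed_le continuous_snd continuous_const))
  have hΔc : IsCompact Δ :=
    (isCompact_Icc.prod isCompact_Icc).of_isClosed_subset hΔclosed hΔsub
  -- the retraction onto Δ
  set proj : ℝ × ℝ → ℝ × ℝ :=
    fun p => (max 0 (min p.1 (max 0 (min p.2 T))), max 0 (min p.2 T)) with hprojdef
  have hprojmem : ∀ p, proj p ∈ Δ := by
    intro p
    refine ⟨le_max_left _ _, ?_, ?_⟩
    · exact max_le (le_max_left _ _) (min_le_right _ _)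
    · exact max_le hT.le (min_le_right _ _)
  have hprojid : ∀ p ∈ Δ, proj p = p := by
    rintro ⟨s, τ⟩ ⟨h1, h2, h3⟩
    have hτ : max 0 (min τ T) = τ := by
      rw [min_eq_left h3, max_eq_right (h1.trans h2)]
    simp only [hprojdef, hτ]
    rw [min_eq_left h2, max_eq_right h1]
  have hprojcont : Continuous proj := by fun_prop
  -- extended kernel
  set Ke : ℝ × ℝ → ℝ := fun p => Δ.restrict K ⟨proj p, hprojmem p⟩ with hKedef
  have hKecont : Continuous Ke :=
    (continuousOn_iff_continuous_restrict.mp hK).comp (hprojcont.subtype_mk hprojmem)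
  have hKeeq : ∀ p ∈ Δ, Ke p = K p := by
    intro p hp
    simp only [hKedef, Set.restrict_apply, hprojid p hp]
    rfl
  -- bound on the kernel
  obtain ⟨M₀, hM₀⟩ := hΔc.exists_bound_of_continuousOn hK
  set M : ℝ := max M₀ 0 with hMdef
  have hM0 : 0 ≤ M := le_max_right _ _
  have hM : ∀ p, |Ke p| ≤ M := fun p =>
    le_trans (hM₀ _ (hprojmem p)) (le_max_left _ _)
  -- the Volterra operator on bounded continuous functions
  have hcont : ∀ f : (ℝ × ℝ) →ᵇ ℝ, Continuous
      (fun p => Ke p + ∫ η in (proj p).1..(proj p).2, Ke ((proj p).1, η) * f (η, (proj p).2)) := by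
    intro f
    have hF : Continuous (Function.uncurry fun (q : ℝ × ℝ) (η : ℝ) => Ke (q.1, η) * f (η, q.2)) := by
      apply Continuous.mul
      · exact hKecont.comp (by fun_prop)
      · exact f.continuous.comp (by fun_prop)
    have h1 : Continuous fun q : ℝ × ℝ => ∫ η in (0:ℝ)..q.2, Ke (q.1, η) * f (η, q.2) :=
      continuous_parametric_intervalIntegral_of_continuous hF continuous_snd
    have h2 : Continuous fun q : ℝ × ℝ => ∫ η in (0:ℝ)..q.1, Ke (q.1, η) * f (η, q.2) :=
      continuous_parametric_intervalIntegral_of_continuous hF continuous_fst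
    have hI : Continuous fun q : ℝ × ℝ => ∫ η in q.1..q.2, Ke (q.1, η) * f (η, q.2) := by
      have : (fun q : ℝ × ℝ => ∫ η in q.1..q.2, Ke (q.1, η) * f (η, q.2)) =
          fun q : ℝ × ℝ => (∫ η in (0:ℝ)..q.2, Ke (q.1, η) * f (η, q.2)) -
            ∫ η in (0:ℝ)..q.1, Ke (q.1, η) * f (η, q.2) := by
        funext q
        rw [integral_interval_sub_left]
        · exact (Continuous.intervalIntegrable (by fun_prop) _ _)
        · exact (Continuous.intervalIntegrable (by fun_prop) _ _)
      rw [this]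
      exact h1.sub h2
    exact hKecont.add (hI.comp hprojcont)
  have hgap : ∀ p : ℝ × ℝ, (proj p).1 ≤ (proj p).2 ∧ 0 ≤ (proj p).2 - (proj p).1 ∧
      (proj p).2 - (proj p).1 ≤ T := by
    intro p
    obtain ⟨h1, h2, h3⟩ := hprojmem p
    exact ⟨h2, by linarith, by linarith⟩
  have hbound : ∀ f : (ℝ × ℝ) →ᵇ ℝ, ∀ p,
      ‖Ke p + ∫ η in (proj p).1..(proj p).2, Ke ((proj p).1, η) * f (η, (proj p).2)‖ ≤
        M + M * ‖f‖ * T := by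
    intro f p
    obtain ⟨hle, hge0, hleT⟩ := hgap p
    have hInt : ‖∫ η in (proj p).1..(proj p).2, Ke ((proj p).1, η) * f (η, (proj p).2)‖ ≤
        M * ‖f‖ * |(proj p).2 - (proj p).1| := by
      apply intervalIntegral.norm_integral_le_of_norm_le_const
      intro η _
      rw [Real.norm_eq_abs, abs_mul]
      exact mul_le_mul (hM _) (f.norm_coe_le_norm _) (abs_nonneg _) hM0
    have habs : |(proj p).2 - (proj p).1| ≤ T := by rw [abs_of_nonneg hge0]; exact hleT
    calc ‖Ke p + _‖ ≤ ‖Ke p‖ + ‖∫ η in (proj p).1..(proj p).2,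
          Ke ((proj p).1, η) * f (η, (proj p).2)‖ := norm_add_le _ _
      _ ≤ M + M * ‖f‖ * T := by
          refine add_le_add ((Real.norm_eq_abs _) ▸ hM p) (hInt.trans ?_)
          exact mul_le_mul_of_nonneg_left habs (by positivity)
  set Φ : ((ℝ × ℝ) →ᵇ ℝ) → ((ℝ × ℝ) →ᵇ ℝ) := fun f =>
    BoundedContinuousFunction.ofNormedAddCommGroup
      (fun p => Ke p + ∫ η in (proj p).1..(proj p).2, Ke ((proj p).1, η) * f (η, (proj p).2))
      (hcont f) (M + M * ‖f‖ * T) (hbound f) with hΦdef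
  have hΦapp : ∀ (f : (ℝ × ℝ) →ᵇ ℝ) (p : ℝ × ℝ),
      Φ f p = Ke p + ∫ η in (proj p).1..(proj p).2, Ke ((proj p).1, η) * f (η, (proj p).2) :=
    fun f p => rfl
  -- pointwise bound for iterates
  have key : ∀ (f g : (ℝ × ℝ) →ᵇ ℝ) (n : ℕ) (p : ℝ × ℝ),
      |Φ^[n] f p - Φ^[n] g p| ≤
        M ^ n * ((proj p).2 - (proj p).1) ^ n / (n.factorial : ℝ) * dist f g := by
    intro f g n
    induction n with
    | zero =>
      intro p
      simpa using (Real.dist_eq (f p) (g p) ▸ BoundedContinuousFunction.dist_coe_le_dist p)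
    | succ n ih =>
      intro p
      obtain ⟨hle, hge0, hleT⟩ := hgap p
      set s' := (proj p).1
      set τ' := (proj p).2
      set d := dist f g with hd
      have hd0 : 0 ≤ d := dist_nonneg
      have hsub : Φ^[n+1] f p - Φ^[n+1] g p =
          ∫ η in s'..τ', Ke (s', η) * (Φ^[n] f (η, τ') - Φ^[n] g (η, τ')) := by
        rw [Function.iterate_succ_apply', Function.iterate_succ_apply',
          hΦapp, hΦapp, add_sub_add_left_eq_sub, ← intervalIntegral.integral_sub
            (Continuous.intervalIntegrable (by fun_prop) _ _)
            (Continuous.intervalIntegrable (by fun_prop) _ _)]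
        congr 1
        funext η
        ring
      rw [hsub]
      have hbd : ∀ η ∈ Set.uIoc s' τ',
          ‖Ke (s', η) * (Φ^[n] f (η, τ') - Φ^[n] g (η, τ'))‖ ≤
            M ^ (n+1) * d / (n.factorial : ℝ) * (τ' - η) ^ n := by
        intro η hη
        rw [Set.uIoc_of_le hle, Set.mem_Ioc] at hη
        have hmem : (η, τ') ∈ Δ := by
          obtain ⟨h1, h2, h3⟩ := hprojmem p
          exact ⟨h1.trans hη.1.le, hη.2, h3⟩
        have hproj : proj (η, τ') = (η, τ') := hprojid _ hmem
        have ihη := ih (η, τ')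
        rw [hproj] at ihη
        have hpow0 : (0:ℝ) ≤ (τ' - η) ^ n := pow_nonneg (by linarith [hη.2]) n
        rw [Real.norm_eq_abs, abs_mul]
        calc |Ke (s', η)| * |Φ^[n] f (η, τ') - Φ^[n] g (η, τ')|
            ≤ M * (M ^ n * (τ' - η) ^ n / (n.factorial : ℝ) * d) :=
              mul_le_mul (hM _) ihη (abs_nonneg _) hM0
          _ = M ^ (n+1) * d / (n.factorial : ℝ) * (τ' - η) ^ n := by ring
      have h1 : ‖∫ η in s'..τ', Ke (s', η) * (Φ^[n] f (η, τ') - Φ^[n] g (η, τ'))‖ ≤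
          |∫ η in s'..τ', M ^ (n+1) * d / (n.factorial : ℝ) * (τ' - η) ^ n| := by
        apply intervalIntegral.norm_integral_le_abs_of_norm_le
        · refine ((ae_restrict_mem measurableSet_uIoc).mono fun η hη => hbd η hη)
        · exact Continuous.intervalIntegrable (by fun_prop) _ _
      have h2 : (∫ η in s'..τ', (τ' - η) ^ n) = (τ' - s') ^ (n+1) / (n+1) := by
        rw [show (fun η => (τ' - η) ^ n) = fun η => (fun u => u ^ n) (τ' - η) from rfl,
          intervalIntegral.integral_comp_sub_left (fun u => u ^ n) τ', sub_self,
          integral_pow]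
        simp
      have h3 : (∫ η in s'..τ', M ^ (n+1) * d / (n.factorial : ℝ) * (τ' - η) ^ n) =
          M ^ (n+1) * d / (n.factorial : ℝ) * ((τ' - s') ^ (n+1) / (n+1)) := by
        rw [intervalIntegral.integral_const_mul, h2]
      have hval : M ^ (n+1) * d / (n.factorial : ℝ) * ((τ' - s') ^ (n+1) / (n+1)) =
          M ^ (n+1) * (τ' - s') ^ (n+1) / ((n+1).factorial : ℝ) * d := by
        rw [Nat.factorial_succ]
        push_cast
        have hfac : (n.factorial : ℝ) ≠ 0 := Nat.cast_ne_zero.mpr n.factorial_ne_zero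
        have : ((n:ℝ) + 1) ≠ 0 := by positivity
        field_simp
      rw [← Real.norm_eq_abs]
      refine h1.trans ?_
      rw [h3, hval, abs_of_nonneg (by positivity)]
  -- the iterates are Lipschitz
  have lip : ∀ n : ℕ, LipschitzWith ((M * T) ^ n / (n.factorial : ℝ)).toNNReal (Φ^[n]) := by
    intro n
    apply LipschitzWith.of_dist_le_mul
    intro f g
    rw [Real.coe_toNNReal _ (by positivity)]
    refine (BoundedContinuousFunction.dist_le (by positivity)).2 fun p => ?_
    obtain ⟨hle, hge0, hleT⟩ := hgap p
    rw [Real.dist_eq]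
    refine (key f g n p).trans ?_
    rw [mul_pow]
    gcongr
  -- pick a contracting iterate
  obtain ⟨n, hn⟩ : ∃ n : ℕ, (M * T) ^ n / (n.factorial : ℝ) < 1 :=
    ((FloorSemiring.tendsto_pow_div_factorial_atTop (M * T)).eventually
      (gt_mem_nhds one_pos)).exists
  have hC : ContractingWith ((M * T) ^ n / (n.factorial : ℝ)).toNNReal (Φ^[n]) :=
    ⟨Real.toNNReal_lt_one.2 hn, lip n⟩
  set ρ : (ℝ × ℝ) →ᵇ ℝ := hC.fixedPoint (Φ^[n]) with hρdef
  have hρfix : Φ ρ = ρ := hC.isFixedPt_fixedPoint_iterate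
  have huniq : ∀ g : (ℝ × ℝ) →ᵇ ℝ, Function.IsFixedPt Φ g → g = ρ :=
    fun g hg => hC.fixedPoint_unique (hg.iterate n)
  have hρc : Continuous fun p : ℝ × ℝ => ρ p := ρ.continuous
  clear_value ρ
  -- the equation on Δ, in extended form and original form
  have hρeq : ∀ s τ : ℝ, 0 ≤ s → s ≤ τ → τ ≤ T →
      ρ (s, τ) = K (s, τ) + ∫ η in s..τ, K (s, η) * ρ (η, τ) := by
    intro s τ h1 h2 h3
    have hmem : ((s, τ) : ℝ × ℝ) ∈ Δ := ⟨h1, h2, h3⟩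
    have hpr : proj (s, τ) = (s, τ) := hprojid _ hmem
    conv_lhs => rw [← hρfix]
    rw [hΦapp, hpr]
    have hKe1 : Ke (s, τ) = K (s, τ) := hKeeq _ hmem
    have hKe2 : (∫ η in s..τ, Ke (s, η) * ρ (η, τ)) = ∫ η in s..τ, K (s, η) * ρ (η, τ) := by
      apply intervalIntegral.integral_congr
      intro η hη
      rw [Set.uIcc_of_le h2, Set.mem_Icc] at hη
      show Ke (s, η) * ρ (η, τ) = K (s, η) * ρ (η, τ)
      rw [hKeeq (s, η) ⟨h1, hη.1, hη.2.trans h3⟩]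
    rw [hKe1, hKe2]
  have hρΔ : ∀ p ∈ Δ, ρ p = Ke p + ∫ η in p.1..p.2, Ke (p.1, η) * ρ (η, p.2) := by
    intro p hp
    conv_lhs => rw [← hρfix]
    rw [hΦapp, hprojid p hp]
  refine ⟨fun p => ρ p, ⟨ρ.continuous.continuousOn, hρeq⟩, ?_, ?_⟩
  · -- uniqueness
    rintro R' ⟨hR'cont, hR'eq⟩
    obtain ⟨C₀, hC₀⟩ := hΔc.exists_bound_of_continuousOn hR'cont
    have hf'cont : Continuous fun p => Δ.restrict R' ⟨proj p, hprojmem p⟩ :=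
      (continuousOn_iff_continuous_restrict.mp hR'cont).comp (hprojcont.subtype_mk hprojmem)
    set f' : (ℝ × ℝ) →ᵇ ℝ := BoundedContinuousFunction.ofNormedAddCommGroup
      (fun p => Δ.restrict R' ⟨proj p, hprojmem p⟩) hf'cont C₀
      (fun p => hC₀ _ (hprojmem p)) with hf'def
    have hf'app : ∀ p, f' p = R' (proj p) := fun p => rfl
    have hfix' : Function.IsFixedPt Φ f' := by
      apply BoundedContinuousFunction.ext
      intro p
      obtain ⟨h1, h2, h3⟩ := hprojmem p
      rw [hΦapp, hf'app]
      have hR' : R' (proj p) = K (proj p) +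
          ∫ η in (proj p).1..(proj p).2, K ((proj p).1, η) * R' (η, (proj p).2) :=
        hR'eq (proj p).1 (proj p).2 h1 h2 h3
      rw [hR']
      congr 1
      apply intervalIntegral.integral_congr
      intro η hη
      rw [Set.uIcc_of_le h2, Set.mem_Icc] at hη
      have hm1 : (((proj p).1, η) : ℝ × ℝ) ∈ Δ := ⟨h1, hη.1, hη.2.trans h3⟩
      have hm2 : ((η, (proj p).2) : ℝ × ℝ) ∈ Δ := ⟨h1.trans hη.1, hη.2, h3⟩
      show Ke ((proj p).1, η) * f' (η, (proj p).2) = K ((proj p).1, η) * R' (η, (proj p).2)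
      rw [hf'app, hprojid _ hm2, hKeeq _ hm1]
    have heqf : f' = ρ := huniq f' hfix'
    intro p hp
    have hval := congrArg (fun u : (ℝ × ℝ) →ᵇ ℝ => u p) heqf
    replace hval : f' p = ρ p := hval
    show ρ p = R' p
    rw [← hval, hf'app, hprojid p hp]
  · -- the Volterra solution
    intro Θ hΘ
    set clamp : ℝ → ℝ := fun t => max 0 (min t T) with hclampdef
    have hclampmem : ∀ t, clamp t ∈ Icc 0 T := fun t =>
      ⟨le_max_left _ _, max_le hT.le (min_le_right _ _)⟩
    have hclampid : ∀ t ∈ Icc 0 T, clamp t = t := by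
      intro t ht
      simp only [hclampdef]
      rw [min_eq_left ht.2, max_eq_right ht.1]
    set Θe : ℝ → ℝ := fun t => (Icc 0 T).restrict Θ ⟨clamp t, hclampmem t⟩ with hΘedef
    have hΘecont : Continuous Θe :=
      (continuousOn_iff_continuous_restrict.mp hΘ).comp ((by fun_prop : Continuous clamp).subtype_mk hclampmem)
    have hΘeeq : ∀ t ∈ Icc 0 T, Θe t = Θ t := by
      intro t ht
      simp only [hΘedef, Set.restrict_apply, hclampid t ht]
      rfl
    have hcontInt2 : ∀ W : ℝ × ℝ → ℝ, Continuous W →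
        Continuous fun u => ∫ v in u..T, W (u, v) := by
      intro W hW
      have huncurry : Continuous (Function.uncurry fun (u : ℝ) (v : ℝ) => W (u, v)) := by
        fun_prop
      have h := continuous_parametric_intervalIntegral_of_continuous (a₀ := T)
        (μ := volume) huncurry continuous_id
      have heq : (fun u => ∫ v in u..T, W (u, v)) = fun u => -∫ v in T..u, W (u, v) := by
        funext u
        rw [intervalIntegral.integral_symm]
      rw [heq]
      exact h.neg
    constructor
    · -- continuity of the solution
      have hB : Continuous fun s => Θe s + ∫ τ in s..T, ρ (s, τ) * Θe τ :=
        hΘecont.add (hcontInt2 (fun q => ρ q * Θe q.2) (by fun_prop))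
      refine hB.continuousOn.congr ?_
      intro s hs
      have hint : (∫ τ in s..T, ρ (s, τ) * Θ τ) = ∫ τ in s..T, ρ (s, τ) * Θe τ := by
        apply intervalIntegral.integral_congr
        intro τ hτ
        rw [Set.uIcc_of_le hs.2, Set.mem_Icc] at hτ
        show ρ (s, τ) * Θ τ = ρ (s, τ) * Θe τ
        rw [hΘeeq τ ⟨hs.1.trans hτ.1, hτ.2⟩]
      show Θ s + _ = Θe s + _
      rw [hΘeeq s hs, hint]
    · -- the Volterra identity
      intro s hs
      congr 1
      have hmemΔ : ∀ τ ∈ Icc s T, ((s, τ) : ℝ × ℝ) ∈ Δ := fun τ hτ => ⟨hs.1, hτ.1, hτ.2⟩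
      have e1 : (∫ τ in s..T, ρ (s, τ) * Θ τ) =
          ∫ τ in s..T, (Ke (s, τ) + ∫ η in s..τ, Ke (s, η) * ρ (η, τ)) * Θe τ := by
        apply intervalIntegral.integral_congr
        intro τ hτ
        beta_reduce
        rw [Set.uIcc_of_le hs.2, Set.mem_Icc] at hτ
        rw [hρΔ (s, τ) (hmemΔ τ (Set.mem_Icc.mpr hτ)), hΘeeq τ ⟨hs.1.trans hτ.1, hτ.2⟩]
      have hcont2 : Continuous fun τ => (∫ η in s..τ, Ke (s, η) * ρ (η, τ)) * Θe τ := by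
        have huncurry : Continuous
            (Function.uncurry fun (τ : ℝ) (η : ℝ) => Ke (s, η) * ρ (η, τ)) := by fun_prop
        exact (continuous_parametric_intervalIntegral_of_continuous (a₀ := s) (μ := volume)
          huncurry continuous_id).mul hΘecont
      have e2 : (∫ τ in s..T, (Ke (s, τ) + ∫ η in s..τ, Ke (s, η) * ρ (η, τ)) * Θe τ) =
          (∫ τ in s..T, Ke (s, τ) * Θe τ) +
            ∫ τ in s..T, (∫ η in s..τ, Ke (s, η) * ρ (η, τ)) * Θe τ := by
        rw [← intervalIntegral.integral_add
          (Continuous.intervalIntegrable (by fun_prop) _ _)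
          (hcont2.intervalIntegrable _ _)]
        apply intervalIntegral.integral_congr
        intro τ _
        beta_reduce
        ring
      have e3 : (∫ τ in s..T, (∫ η in s..τ, Ke (s, η) * ρ (η, τ)) * Θe τ) =
          ∫ τ in s..T, ∫ η in s..τ, Ke (s, η) * ρ (η, τ) * Θe τ := by
        apply intervalIntegral.integral_congr
        intro τ _
        beta_reduce
        rw [← intervalIntegral.integral_mul_const]
      have e4 : (∫ τ in s..T, ∫ η in s..τ, Ke (s, η) * ρ (η, τ) * Θe τ) =
          ∫ η in s..T, ∫ τ in η..T, Ke (s, η) * ρ (η, τ) * Θe τ :=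
        volterra_triangle_swap hs.2 (by fun_prop)
      have e5 : (∫ η in s..T, ∫ τ in η..T, Ke (s, η) * ρ (η, τ) * Θe τ) =
          ∫ η in s..T, Ke (s, η) * ∫ τ in η..T, ρ (η, τ) * Θe τ := by
        apply intervalIntegral.integral_congr
        intro η _
        beta_reduce
        rw [← intervalIntegral.integral_const_mul]
        apply intervalIntegral.integral_congr
        intro τ _
        beta_reduce
        ring
      have e6 : (∫ τ in s..T, Ke (s, τ) * Θe τ) +
          (∫ η in s..T, Ke (s, η) * ∫ τ in η..T, ρ (η, τ) * Θe τ) =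
          ∫ τ in s..T, Ke (s, τ) * (Θe τ + ∫ x in τ..T, ρ (τ, x) * Θe x) := by
        have hI : Continuous fun τ : ℝ => ∫ x in τ..T, ρ (τ, x) * Θe x :=
          hcontInt2 (fun q => ρ q * Θe q.2) (by fun_prop)
        have h1 : IntervalIntegrable (fun τ : ℝ => Ke (s, τ) * Θe τ) volume s T :=
          Continuous.intervalIntegrable (by fun_prop) _ _
        have h2 : IntervalIntegrable
            (fun η : ℝ => Ke (s, η) * ∫ τ in η..T, ρ (η, τ) * Θe τ) volume s T :=
          Continuous.intervalIntegrable
            ((hKecont.comp (by fun_prop : Continuous fun η : ℝ => ((s, η) : ℝ × ℝ))).mul hI) _ _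
        rw [← intervalIntegral.integral_add h1 h2]
        apply intervalIntegral.integral_congr
        intro τ _
        beta_reduce
        ring
      have e7 : (∫ τ in s..T, Ke (s, τ) * (Θe τ + ∫ x in τ..T, ρ (τ, x) * Θe x)) =
          ∫ τ in s..T, K (s, τ) * (Θ τ + ∫ x in τ..T, ρ (τ, x) * Θ x) := by
        apply intervalIntegral.integral_congr
        intro τ hτ
        rw [Set.uIcc_of_le hs.2, Set.mem_Icc] at hτ
        beta_reduce
        have hτ0T : τ ∈ Icc (0:ℝ) T := ⟨hs.1.trans hτ.1, hτ.2⟩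
        have hinner : (∫ x in τ..T, ρ (τ, x) * Θe x) = ∫ x in τ..T, ρ (τ, x) * Θ x := by
          apply intervalIntegral.integral_congr
          intro x hx
          beta_reduce
          rw [Set.uIcc_of_le hτ.2, Set.mem_Icc] at hx
          rw [hΘeeq x ⟨hτ0T.1.trans hx.1, hx.2⟩]
        rw [hKeeq (s, τ) (hmemΔ τ (Set.mem_Icc.mpr hτ)), hΘeeq τ hτ0T, hinner]
      show (∫ τ in s..T, ρ (s, τ) * Θ τ) =
          ∫ τ in s..T, K (s, τ) * (Θ τ + ∫ x in τ..T, ρ (τ, x) * Θ x)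
      rw [e1, e2, e3, e4, e5, e6, e7]
end

section
/- For every Lebesgue-measurable function v : [0,T] → [0,∞) with v(s)² ≤ a(s) for all s ∈ [0,T], and every Lebesgue-measurable function Z : [0,T] → ℝ, the estimate (∫_0^T v(s)·|Z(s)| ds)² ≤ (1/β) · ∫_0^T Z(s)²·e^{β A(s)} ds holds, where both sides are interpreted as values in [0,∞]. -/
open MeasureTheory Set Real ENNReal

-- Step A: tail integral of exponential
lemma stepA {β : ℝ} (hβ : 0 < β) (c : ℝ) :
    ∫⁻ u in Ioi c, ENNReal.ofReal (β * Real.exp (-(β * u))) =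
      ENNReal.ofReal (Real.exp (-(β * c))) := by
  have hint : IntegrableOn (fun u => β * Real.exp (-(β * u))) (Ioi c) := by
    simpa [neg_mul, IntegrableOn] using (exp_neg_integrableOn_Ioi c hβ).const_mul β
  rw [← ofReal_integral_eq_lintegral_ofReal hint
    (Filter.Eventually.of_forall fun u => by positivity)]
  congr 1
  have h1 : (∫ u in Ioi c, Real.exp (-(β * u))) = β⁻¹ • Real.exp (-(β * c)) := by
    rw [show (fun u => Real.exp (-(β*u))) = (fun u => (fun x => Real.exp (-x)) (β * u)) by rfl]
    rw [integral_comp_mul_left_Ioi (fun x => Real.exp (-x)) c hβ, integral_exp_neg_Ioi]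
  rw [MeasureTheory.integral_const_mul, h1]
  rw [smul_eq_mul]
  field_simp

-- Step D
lemma stepD {β : ℝ} (hβ : 0 < β) :
    ∫⁻ u in Ioi (0:ℝ), ENNReal.ofReal (β * Real.exp (-(β * u))) * ENNReal.ofReal u ≤
      ENNReal.ofReal (1 / β) := by
  have hint0 : IntegrableOn (fun u : ℝ => u ^ (1:ℝ) * Real.exp (-(β * u^(1:ℝ)))) (Ioi 0) := by
    simpa using integrableOn_rpow_mul_exp_neg_mul_rpow (p := 1) (s := 1) (b := β)
      (by norm_num) one_pos hβ
  have hint' : IntegrableOn (fun u : ℝ => β * Real.exp (-(β * u)) * u) (Ioi 0) := by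
    apply MeasureTheory.IntegrableOn.congr_fun (hint0.const_mul β) ?_ measurableSet_Ioi
    intro u hu
    simp only [Real.rpow_one]
    ring
  have heq : ∀ᵐ u ∂(volume.restrict (Ioi (0:ℝ))),
      ENNReal.ofReal (β * Real.exp (-(β * u))) * ENNReal.ofReal u
        = ENNReal.ofReal (β * Real.exp (-(β * u)) * u) := by
    filter_upwards [ae_restrict_mem measurableSet_Ioi] with u hu
    exact (ENNReal.ofReal_mul (by positivity)).symm
  rw [lintegral_congr_ae heq, ← ofReal_integral_eq_lintegral_ofReal hint'
    (by filter_upwards [ae_restrict_mem measurableSet_Ioi] with u hu;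
        exact mul_nonneg (by positivity) hu.le)]
  apply ENNReal.ofReal_le_ofReal
  have hval : (∫ u in Ioi (0:ℝ), u ^ ((2:ℝ) - 1) * Real.exp (-(β * u))) = (1/β)^(2:ℝ) * Real.Gamma 2 :=
    integral_rpow_mul_exp_neg_mul_Ioi (by norm_num) hβ
  have h3 : (∫ u in Ioi (0:ℝ), β * Real.exp (-(β * u)) * u) = β * ∫ u in Ioi (0:ℝ), u ^ ((2:ℝ)-1) * Real.exp (-(β*u)) := by
    rw [← MeasureTheory.integral_const_mul]
    apply setIntegral_congr_fun measurableSet_Ioi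
    intro u hu
    simp only [show ((2:ℝ)-1) = (1:ℝ) by norm_num, Real.rpow_one]
    ring
  have h2 : ((1:ℝ)/β)^(2:ℝ) = (1/β)^(2:ℕ) := by rw [← Real.rpow_natCast]; norm_num
  rw [h3, hval, Real.Gamma_two, mul_one, h2]
  apply le_of_eq
  field_simp

lemma contA {T : ℝ} {a : ℝ → ℝ} (ha_int : IntegrableOn a (Icc 0 T)) :
    ContinuousOn (fun s => ∫ r in (0:ℝ)..s, a r) (Icc 0 T) := by
  have h1 : ContinuousOn (fun x => ∫ t in Ioc 0 x, a t) (Icc 0 T) :=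
    intervalIntegral.continuousOn_primitive ha_int
  apply h1.congr
  intro x hx
  show (∫ r in (0:ℝ)..x, a r) = ∫ t in Ioc 0 x, a t
  rw [intervalIntegral.integral_of_le hx.1]

lemma stepB (T u : ℝ) (a : ℝ → ℝ)
    (ha_nonneg : ∀ s, 0 ≤ a s) (ha_int : IntegrableOn a (Icc 0 T)) :
    ∫⁻ s in {s : ℝ | (∫ r in (0:ℝ)..s, a r) < u} ∩ Icc 0 T, ENNReal.ofReal (a s)
      ≤ ENNReal.ofReal u := by
  set A : ℝ → ℝ := fun s => ∫ r in (0:ℝ)..s, a r with hA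
  set E : Set ℝ := {s | A s < u} ∩ Icc 0 T with hEdef
  rcases E.eq_empty_or_nonempty with hE | hE
  · rw [hE]; simp
  · have hbdd : BddAbove E := ⟨T, fun s hs => hs.2.2⟩
    set c := sSup E with hc
    have hcT : c ≤ T := csSup_le hE fun s hs => hs.2.2
    have hc0 : 0 ≤ c := hE.elim fun s hs => le_trans hs.2.1 (le_csSup hbdd hs)
    have hAcont : ContinuousOn A (Icc 0 T) := contA ha_int
    have hcc : c ∈ closure E := csSup_mem_closure hE hbdd
    have hcIcc : c ∈ Icc 0 T := ⟨hc0, hcT⟩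
    have hAc : A c ≤ u := by
      have h2 : ContinuousWithinAt A E c := (hAcont c hcIcc).mono inter_subset_right
      have h3 : A c ∈ closure (A '' E) := h2.mem_closure_image hcc
      have h5 : A '' E ⊆ Iic u := by
        rintro x ⟨s, hs, rfl⟩
        exact le_of_lt (show A s < u from hs.1)
      have h4 : closure (A '' E) ⊆ Iic u := closure_minimal h5 isClosed_Iic
      exact h4 h3
    have hEsub : E ⊆ Icc 0 c := fun s hs => ⟨hs.2.1, le_csSup hbdd hs⟩
    calc ∫⁻ s in E, ENNReal.ofReal (a s) ≤ ∫⁻ s in Icc 0 c, ENNReal.ofReal (a s) :=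
        lintegral_mono_set hEsub
      _ = ENNReal.ofReal (∫ s in Icc 0 c, a s) := by
          rw [← ofReal_integral_eq_lintegral_ofReal (ha_int.mono_set (Icc_subset_Icc le_rfl hcT))
            (Filter.Eventually.of_forall fun s => ha_nonneg s)]
      _ ≤ ENNReal.ofReal u := ENNReal.ofReal_le_ofReal (by
          rw [integral_Icc_eq_integral_Ioc, ← intervalIntegral.integral_of_le hc0]
          exact hAc)

lemma key (T β : ℝ) (hT : 0 < T) (hβ : 0 < β) (a : ℝ → ℝ) (ha_meas : Measurable a)
    (ha_nonneg : ∀ s, 0 ≤ a s) (ha_int : IntegrableOn a (Icc 0 T)) :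
    ∫⁻ s in Icc (0:ℝ) T, ENNReal.ofReal (a s * Real.exp (-(β * ∫ r in (0:ℝ)..s, a r)))
      ≤ ENNReal.ofReal (1 / β) := by
  set A : ℝ → ℝ := fun s => ∫ r in (0:ℝ)..s, a r with hA
  have hAmeas : AEMeasurable A (volume.restrict (Icc (0:ℝ) T)) :=
    (contA ha_int).aemeasurable measurableSet_Icc
  have hAnonneg : ∀ s ∈ Icc (0:ℝ) T, 0 ≤ A s := fun s hs =>
    intervalIntegral.integral_nonneg hs.1 (fun r _ => ha_nonneg r)
  set g : ℝ → ℝ≥0∞ := fun u => ENNReal.ofReal (β * Real.exp (-(β * u))) with hg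
  have hgmeas : Measurable g := by
    apply Measurable.ennreal_ofReal
    exact (Real.measurable_exp.comp ((measurable_id.const_mul β).neg)).const_mul β
  set F : ℝ → ℝ → ℝ≥0∞ := fun s u => ENNReal.ofReal (a s) * ((Ioi (A s)).indicator g u)
    with hF
  have step1 : ∀ s ∈ Icc (0:ℝ) T,
      ENNReal.ofReal (a s * Real.exp (-(β * A s))) = ∫⁻ u in Ioi (0:ℝ), F s u := by
    intro s hs
    have h0 : (0:ℝ) ≤ A s := hAnonneg s hs
    have hind : ∫⁻ u in Ioi (0:ℝ), (Ioi (A s)).indicator g u = ∫⁻ u in Ioi (A s), g u := by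
      rw [lintegral_indicator measurableSet_Ioi,
        Measure.restrict_restrict measurableSet_Ioi, Ioi_inter_Ioi, max_eq_left h0]
    rw [ENNReal.ofReal_mul (ha_nonneg s), ← stepA hβ (A s), ← hind,
      ← lintegral_const_mul' _ _ ENNReal.ofReal_ne_top]
  have hswapmeas : AEMeasurable (Function.uncurry F)
      ((volume.restrict (Icc (0:ℝ) T)).prod (volume.restrict (Ioi (0:ℝ)))) := by
    have hset : NullMeasurableSet {q : ℝ × ℝ | A q.1 < q.2}
        ((volume.restrict (Icc (0:ℝ) T)).prod (volume.restrict (Ioi (0:ℝ)))) :=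
      nullMeasurableSet_lt hAmeas.comp_fst measurable_snd.aemeasurable
    have heq : Function.uncurry F = fun q : ℝ × ℝ =>
        ENNReal.ofReal (a q.1) * ({q : ℝ × ℝ | A q.1 < q.2}.indicator (fun q => g q.2) q) := by
      funext q
      simp only [Function.uncurry, hF, Set.indicator_apply, mem_Ioi, mem_setOf_eq]
    rw [heq]
    exact ((ha_meas.ennreal_ofReal.comp measurable_fst).aemeasurable).mul
      (((hgmeas.comp measurable_snd).aemeasurable).indicator₀ hset)
  have main_eq : ∫⁻ s in Icc (0:ℝ) T, ENNReal.ofReal (a s * Real.exp (-(β * A s)))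
      = ∫⁻ u in Ioi (0:ℝ), ∫⁻ s in Icc (0:ℝ) T, F s u := by
    rw [← lintegral_lintegral_swap hswapmeas]
    apply lintegral_congr_ae
    filter_upwards [ae_restrict_mem measurableSet_Icc] with s hs
    exact step1 s hs
  have inner_le : ∀ u ∈ Ioi (0:ℝ), (∫⁻ s in Icc (0:ℝ) T, F s u) ≤ g u * ENNReal.ofReal u := by
    intro u hu
    have hset : NullMeasurableSet {s | A s < u} (volume.restrict (Icc (0:ℝ) T)) :=
      nullMeasurableSet_lt hAmeas aemeasurable_const
    calc ∫⁻ s in Icc (0:ℝ) T, F s u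
        = ∫⁻ s in Icc (0:ℝ) T, {s | A s < u}.indicator (fun s => g u * ENNReal.ofReal (a s)) s := by
          apply lintegral_congr
          intro s
          simp only [hF, Set.indicator_apply, mem_Ioi, mem_setOf_eq]
          by_cases h : A s < u <;> simp [h, mul_comm]
      _ = ∫⁻ s in {s | A s < u} ∩ Icc (0:ℝ) T, g u * ENNReal.ofReal (a s) := by
          rw [lintegral_indicator₀ hset, Measure.restrict_restrict₀ hset]
      _ = g u * ∫⁻ s in {s | A s < u} ∩ Icc (0:ℝ) T, ENNReal.ofReal (a s) :=
          lintegral_const_mul' _ _ ENNReal.ofReal_ne_top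
      _ ≤ g u * ENNReal.ofReal u := mul_le_mul_right (stepB T u a ha_nonneg ha_int) _
  calc ∫⁻ s in Icc (0:ℝ) T, ENNReal.ofReal (a s * Real.exp (-(β * A s)))
      = ∫⁻ u in Ioi (0:ℝ), ∫⁻ s in Icc (0:ℝ) T, F s u := main_eq
    _ ≤ ∫⁻ u in Ioi (0:ℝ), g u * ENNReal.ofReal u := by
        apply lintegral_mono_ae
        filter_upwards [ae_restrict_mem measurableSet_Ioi] with u hu
        exact inner_le u hu
    _ ≤ ENNReal.ofReal (1 / β) := stepD hβ

/-- With `a : [0,T] → [0,∞)` Lebesgue integrable, `A(s) = ∫_0^s a(r) dr`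
and `β > 0`, for every Lebesgue-measurable `v : [0,T] → [0,∞)` with `v(s)² ≤ a(s)` on
`[0,T]` and every Lebesgue-measurable `Z : [0,T] → ℝ`, the estimate
`(∫_0^T v|Z|)² ≤ (1/β) ∫_0^T Z² e^{βA}` holds in `[0,∞]`. -/
theorem weighted_cauchy_schwarz_estimate_v
    (T β : ℝ) (hT : 0 < T) (hβ : 0 < β)
    (a : ℝ → ℝ)
    (ha_nonneg : ∀ s ∈ Icc (0:ℝ) T, 0 ≤ a s)
    (ha_int : IntegrableOn a (Icc 0 T))
    (v : ℝ → ℝ) (hv_meas : Measurable v)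
    (hv_nonneg : ∀ s ∈ Icc (0:ℝ) T, 0 ≤ v s)
    (hv_le : ∀ s ∈ Icc (0:ℝ) T, v s ^ 2 ≤ a s)
    (Z : ℝ → ℝ) (hZ : Measurable Z) :
    (∫⁻ s in Icc (0:ℝ) T, ENNReal.ofReal (v s * |Z s|)) ^ 2 ≤
      ENNReal.ofReal (1 / β) *
        ∫⁻ s in Icc (0:ℝ) T,
          ENNReal.ofReal (Z s ^ 2 * Real.exp (β * ∫ r in (0:ℝ)..s, a r)) := by
  classical
  -- a measurable nonnegative version of `a`
  set b : ℝ → ℝ := fun s => max (ha_int.aemeasurable.mk a s) 0 with hbdef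
  have hb_meas : Measurable b := ha_int.aemeasurable.measurable_mk.max measurable_const
  have hb_nonneg : ∀ s, 0 ≤ b s := fun s => le_max_right _ _
  have hab : a =ᵐ[volume.restrict (Icc (0:ℝ) T)] b := by
    filter_upwards [ha_int.aemeasurable.ae_eq_mk, ae_restrict_mem measurableSet_Icc] with s h1 h2
    rw [hbdef]
    simp only
    rw [← h1, max_eq_left (ha_nonneg s h2)]
  have hb_int : IntegrableOn b (Icc 0 T) := ha_int.congr hab
  set A : ℝ → ℝ := fun s => ∫ r in (0:ℝ)..s, a r with hAdef
  have hAB : ∀ s ∈ Icc (0:ℝ) T, (∫ r in (0:ℝ)..s, b r) = A s := by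
    intro s hs
    rw [hAdef]
    simp only
    rw [intervalIntegral.integral_of_le hs.1, intervalIntegral.integral_of_le hs.1]
    apply integral_congr_ae
    have hsub : Ioc (0:ℝ) s ⊆ Icc (0:ℝ) T :=
      Ioc_subset_Icc_self.trans (Icc_subset_Icc le_rfl hs.2)
    exact Filter.EventuallyEq.symm (ae_restrict_of_ae_restrict_of_subset hsub hab)
  have hA_aem : AEMeasurable A (volume.restrict (Icc (0:ℝ) T)) :=
    (contA ha_int).aemeasurable measurableSet_Icc
  set f : ℝ → ℝ≥0∞ := fun s => ENNReal.ofReal (v s * Real.exp (-(β * A s) / 2)) with hfdef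
  set G : ℝ → ℝ≥0∞ := fun s => ENNReal.ofReal (|Z s| * Real.exp (β * A s / 2)) with hGdef
  have hf_meas : AEMeasurable f (volume.restrict (Icc (0:ℝ) T)) := by
    apply ENNReal.measurable_ofReal.comp_aemeasurable
    exact hv_meas.aemeasurable.mul
      (Real.measurable_exp.comp_aemeasurable ((hA_aem.const_mul β).neg.div_const 2))
  have hG_meas : AEMeasurable G (volume.restrict (Icc (0:ℝ) T)) := by
    apply ENNReal.measurable_ofReal.comp_aemeasurable
    exact hZ.abs.aemeasurable.mul
      (Real.measurable_exp.comp_aemeasurable ((hA_aem.const_mul β).div_const 2))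
  have hconj : Real.HolderConjugate 2 2 := Real.HolderConjugate.two_two
  have hholder := ENNReal.lintegral_mul_le_Lp_mul_Lq (volume.restrict (Icc (0:ℝ) T)) hconj
    hf_meas hG_meas
  have hfg : (∫⁻ s in Icc (0:ℝ) T, (f * G) s) = ∫⁻ s in Icc (0:ℝ) T,
      ENNReal.ofReal (v s * |Z s|) := by
    apply lintegral_congr_ae
    filter_upwards [ae_restrict_mem measurableSet_Icc] with s hs
    show f s * G s = _
    rw [hfdef, hGdef]
    simp only
    rw [← ENNReal.ofReal_mul (mul_nonneg (hv_nonneg s hs) (Real.exp_pos _).le)]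
    congr 1
    have h2 : Real.exp (-(β * A s) / 2) * Real.exp (β * A s / 2) = 1 := by
      rw [← Real.exp_add, show -(β * A s) / 2 + β * A s / 2 = 0 by ring, Real.exp_zero]
    calc v s * Real.exp (-(β * A s) / 2) * (|Z s| * Real.exp (β * A s / 2))
        = v s * |Z s| * (Real.exp (-(β * A s) / 2) * Real.exp (β * A s / 2)) := by ring
      _ = v s * |Z s| := by rw [h2, mul_one]
  have hf2 : (∫⁻ s in Icc (0:ℝ) T, f s ^ (2:ℝ)) ≤ ENNReal.ofReal (1 / β) := by
    refine le_trans ?_ (key T β hT hβ b hb_meas hb_nonneg hb_int)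
    apply lintegral_mono_ae
    filter_upwards [ae_restrict_mem measurableSet_Icc, hab] with s hs habs
    have hv0 := hv_nonneg s hs
    have h1 : f s ^ (2:ℝ) = ENNReal.ofReal ((v s * Real.exp (-(β * A s) / 2)) ^ 2) := by
      rw [hfdef]
      simp only
      rw [show (2:ℝ) = ((2:ℕ):ℝ) by norm_num, ENNReal.rpow_natCast,
        ← ENNReal.ofReal_pow (by positivity)]
    rw [h1]
    apply ENNReal.ofReal_le_ofReal
    have e2 : Real.exp (-(β * A s) / 2) ^ 2 = Real.exp (-(β * A s)) := by
      rw [sq, ← Real.exp_add, show -(β * A s) / 2 + -(β * A s) / 2 = -(β * A s) by ring]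
    calc (v s * Real.exp (-(β * A s) / 2)) ^ 2 = v s ^ 2 * Real.exp (-(β * A s)) := by
          rw [mul_pow, e2]
      _ ≤ b s * Real.exp (-(β * ∫ r in (0:ℝ)..s, b r)) := by
          rw [hAB s hs]
          exact mul_le_mul_of_nonneg_right (habs ▸ hv_le s hs) (Real.exp_pos _).le
  have hG2 : (∫⁻ s in Icc (0:ℝ) T, G s ^ (2:ℝ)) = ∫⁻ s in Icc (0:ℝ) T,
      ENNReal.ofReal (Z s ^ 2 * Real.exp (β * A s)) := by
    apply lintegral_congr
    intro s
    have h1 : G s ^ (2:ℝ) = ENNReal.ofReal ((|Z s| * Real.exp (β * A s / 2)) ^ 2) := by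
      rw [hGdef]
      simp only
      rw [show (2:ℝ) = ((2:ℕ):ℝ) by norm_num, ENNReal.rpow_natCast,
        ← ENNReal.ofReal_pow (by positivity)]
    rw [h1]
    congr 1
    have e2 : Real.exp (β * A s / 2) ^ 2 = Real.exp (β * A s) := by
      rw [sq, ← Real.exp_add, show β * A s / 2 + β * A s / 2 = β * A s by ring]
    rw [mul_pow, e2, sq_abs]
  have hsq : ∀ x : ℝ≥0∞, (x ^ ((1:ℝ) / 2)) ^ (2:ℕ) = x := fun x => by
    rw [← ENNReal.rpow_natCast (x ^ ((1:ℝ) / 2)) 2, ← ENNReal.rpow_mul]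
    norm_num
  calc (∫⁻ s in Icc (0:ℝ) T, ENNReal.ofReal (v s * |Z s|)) ^ 2
      = (∫⁻ s in Icc (0:ℝ) T, (f * G) s) ^ 2 := by rw [hfg]
    _ ≤ ((∫⁻ s in Icc (0:ℝ) T, f s ^ (2:ℝ)) ^ ((1:ℝ)/2)
          * (∫⁻ s in Icc (0:ℝ) T, G s ^ (2:ℝ)) ^ ((1:ℝ)/2)) ^ 2 := by
        exact pow_le_pow_left' hholder 2
    _ = (∫⁻ s in Icc (0:ℝ) T, f s ^ (2:ℝ)) * (∫⁻ s in Icc (0:ℝ) T, G s ^ (2:ℝ)) := by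
        rw [mul_pow, hsq, hsq]
    _ ≤ ENNReal.ofReal (1 / β) * (∫⁻ s in Icc (0:ℝ) T, G s ^ (2:ℝ)) :=
        mul_le_mul_left hf2 _
    _ = ENNReal.ofReal (1 / β) *
        ∫⁻ s in Icc (0:ℝ) T, ENNReal.ofReal (Z s ^ 2 * Real.exp (β * A s)) := by rw [hG2]
end

section
/- For all b, σ, T > 0 one has 2e^{bT} − (1 + bT)² − 1 > 0, and the strict inequality 2b / ((1 − e^{−bT}) σ²) < 2 b³ T² e^{bT} / ( σ² ( 2e^{bT} − (1 + bT)² − 1 ) ) holds. -/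
lemma quad_lt_exp (x : ℝ) (hx : 0 < x) : 1 + x + x ^ 2 / 2 < Real.exp x := by
  have h : StrictMonoOn (fun y : ℝ => Real.exp y - 1 - y - y ^ 2 / 2) (Set.Ici 0) := by
    apply strictMonoOn_of_deriv_pos (convex_Ici 0)
    · fun_prop
    · intro y hy
      rw [interior_Ici] at hy
      have hy' : 0 < y := hy
      have hd := (((Real.hasDerivAt_exp y).sub_const 1).sub (hasDerivAt_id y)).sub
          ((hasDerivAt_pow 2 y).div_const 2)
      erw [hd.deriv]
      have := Real.add_one_lt_exp (ne_of_gt hy')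
      norm_num
      linarith
  have h0 : (0:ℝ) ∈ Set.Ici (0:ℝ) := Set.self_mem_Ici
  have hx' : x ∈ Set.Ici (0:ℝ) := le_of_lt hx
  have := h h0 hx' hx
  simp only [Real.exp_zero] at this
  linarith

lemma key_ineq (x : ℝ) (hx : 0 < x) : 2 * (Real.exp x - 1 - x) < x ^ 2 * Real.exp x := by
  have h : StrictMonoOn
      (fun y : ℝ => y ^ 2 + 2 * Real.exp (-y) + 2 * (y * Real.exp (-y)) - 2) (Set.Ici 0) := by
    apply strictMonoOn_of_deriv_pos (convex_Ici 0)
    · fun_prop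
    · intro y hy
      rw [interior_Ici] at hy
      have hy' : 0 < y := hy
      have he : HasDerivAt (fun y : ℝ => Real.exp (-y)) (-Real.exp (-y)) y := by
        simpa [Function.comp_def] using (Real.hasDerivAt_exp (-y)).comp y (hasDerivAt_neg y)
      have hd := (((hasDerivAt_pow 2 y).add (he.const_mul 2)).add
          (((hasDerivAt_id y).mul he).const_mul 2)).sub_const 2
      simp only [id_eq] at hd
      erw [hd.deriv]
      have h1 : Real.exp (-y) < 1 := by
        rw [Real.exp_lt_one_iff]; linarith
      have h2 : 0 < Real.exp (-y) := Real.exp_pos _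
      norm_num
      nlinarith [mul_pos hy' (sub_pos.mpr h1)]
  have h0 : (0:ℝ) ∈ Set.Ici (0:ℝ) := Set.self_mem_Ici
  have hx' : x ∈ Set.Ici (0:ℝ) := le_of_lt hx
  have hg := h h0 hx' hx
  simp only [neg_zero, Real.exp_zero] at hg
  have he1 : Real.exp (-x) * Real.exp x = 1 := by
    rw [← Real.exp_add]; simp
  have hep : 0 < Real.exp x := Real.exp_pos x
  nlinarith [mul_pos hep (by nlinarith :
    (0:ℝ) < x ^ 2 + 2 * Real.exp (-x) + 2 * (x * Real.exp (-x)) - 2)]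

/-- For all `b, σ, T > 0` one has `2e^{bT} − (1 + bT)² − 1 > 0`, and the
CIR exponential-moment threshold is strictly smaller than Korn's explosion threshold:
`2b/((1 − e^{−bT})σ²) < 2b³T²e^{bT}/(σ²(2e^{bT} − (1 + bT)² − 1))`. -/
theorem cir_threshold_lt_korn_threshold
    (b σ T : ℝ) (hb : 0 < b) (hσ : 0 < σ) (hT : 0 < T) :
    0 < 2 * Real.exp (b * T) - (1 + b * T) ^ 2 - 1 ∧
    2 * b / ((1 - Real.exp (-(b * T))) * σ ^ 2) <
      2 * b ^ 3 * T ^ 2 * Real.exp (b * T) /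
        (σ ^ 2 * (2 * Real.exp (b * T) - (1 + b * T) ^ 2 - 1)) := by
  have hx : 0 < b * T := mul_pos hb hT
  have hA := quad_lt_exp (b * T) hx
  have hB := key_ineq (b * T) hx
  have hD : 0 < 2 * Real.exp (b * T) - (1 + b * T) ^ 2 - 1 := by nlinarith
  refine ⟨hD, ?_⟩
  have hexp : Real.exp (-(b * T)) < 1 := by rw [Real.exp_lt_one_iff]; linarith
  have hden1 : 0 < (1 - Real.exp (-(b * T))) * σ ^ 2 :=
    mul_pos (by linarith) (by positivity)
  have hden2 : 0 < σ ^ 2 * (2 * Real.exp (b * T) - (1 + b * T) ^ 2 - 1) :=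
    mul_pos (by positivity) hD
  rw [div_lt_div_iff₀ hden1 hden2]
  have h1 : (1 - Real.exp (-(b * T))) * Real.exp (b * T) = Real.exp (b * T) - 1 := by
    rw [sub_mul, one_mul, ← Real.exp_add]; simp
  have hrw : 2 * b ^ 3 * T ^ 2 * Real.exp (b * T) * ((1 - Real.exp (-(b * T))) * σ ^ 2)
      = 2 * b * (σ ^ 2 * ((b * T) ^ 2 * (Real.exp (b * T) - 1))) := by
    linear_combination 2 * b ^ 3 * T ^ 2 * σ ^ 2 * h1
  rw [hrw]
  have hlt : 2 * Real.exp (b * T) - (1 + b * T) ^ 2 - 1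
      < (b * T) ^ 2 * (Real.exp (b * T) - 1) := by nlinarith
  have h2b : 0 < 2 * b := by linarith
  exact mul_lt_mul_of_pos_left (mul_lt_mul_of_pos_left hlt (by positivity)) h2b
end
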